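/- Let K be a linear ordered field and t ∈ K an element greater than every rational number (i.e., (q : K) < t for every q ∈ ℚ). Suppose s, c ∈ K satisfy s > 0, c > 0, s² = t and c³ = t. Then for all α, β in the subfield of K generated by {t} (which is a copy of the rational function field ℚ(t)), if α < s and s < β, then also α < c and c < β. In other words, no interval of K with endpoints in ℚ(t) contains the square root of t without also containing the cube root of t, so these two roots of the polynomial (x² − t)(x³ − t) cannot be separated by intervals with endpoints in F = ℚ(t). -/

import Mathlib

open Polynomial

lemma my_aeval_abs_le {K : Type*} [Field K] [LinearOrder K] [IsStrictOrderedRing K] {t : K} (ht1 : (1:K) ≤ t)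
    (p : ℤ[X]) :
    |aeval t p| ≤ ((∑ i ∈ Finset.range (p.natDegree + 1), |p.coeff i| : ℤ) : K)
      * t ^ p.natDegree := by
  have ht0 : (0:K) ≤ t := zero_le_one.trans ht1
  rw [aeval_eq_sum_range]
  refine (Finset.abs_sum_le_sum_abs _ _).trans ?_
  push_cast
  rw [Finset.sum_mul]
  apply Finset.sum_le_sum
  intro i hi
  rw [zsmul_eq_mul, abs_mul, abs_pow, abs_of_nonneg ht0]
  exact mul_le_mul_of_nonneg_left
    (pow_le_pow_right₀ ht1 (Nat.lt_succ_iff.mp (Finset.mem_range.mp hi)))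
    (abs_nonneg _)

/-- two-sided bound for an integer polynomial with positive leading coefficient,
evaluated at an infinitely large element. -/
lemma my_aeval_bounds {K : Type*} [Field K] [LinearOrder K] [IsStrictOrderedRing K] {t : K}
    (ht : ∀ q : ℚ, (q : K) < t) (p : ℤ[X]) (hp : 0 < p.leadingCoeff) :
    ((p.leadingCoeff : K) / 2) * t ^ p.natDegree ≤ aeval t p ∧
      aeval t p ≤ 2 * (p.leadingCoeff : K) * t ^ p.natDegree := by
  have ht1 : (1:K) ≤ t := le_of_lt (by simpa using ht 1)
  have ht0 : (0:K) < t := lt_of_lt_of_le zero_lt_one ht1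
  set a : K := (p.leadingCoeff : K) with ha
  have ha0 : 0 < a := by rw [ha]; exact_mod_cast hp
  set n := p.natDegree with hn
  have htn : (0:K) < t ^ n := pow_pos ht0 n
  have hre : aeval t p.eraseLead = aeval t p - a * t ^ n := by
    conv_rhs => rw [← Polynomial.eraseLead_add_C_mul_X_pow p]
    simp [mul_comm, ha, hn]
  have key : |aeval t p - a * t ^ n| ≤ a / 2 * t ^ n := by
    rcases eq_or_ne p.eraseLead 0 with h0 | h0
    · rw [← hre, h0]
      simp only [map_zero, abs_zero]
      positivity
    · obtain hd | hd := p.eraseLead_natDegree_lt_or_eraseLead_eq_zero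
      swap; · exact absurd hd h0
      obtain ⟨m, hm⟩ : ∃ m, n = m + 1 := ⟨n - 1, by omega⟩
      set M : ℤ := ∑ i ∈ Finset.range (p.eraseLead.natDegree + 1), |p.eraseLead.coeff i|
        with hM
      have hM0 : (0:K) ≤ (M : K) := by
        have : (0:ℤ) ≤ M := Finset.sum_nonneg fun i _ => abs_nonneg _
        exact_mod_cast this
      have h1 : |aeval t p.eraseLead| ≤ (M : K) * t ^ m := by
        refine (my_aeval_abs_le ht1 p.eraseLead).trans ?_
        exact mul_le_mul_of_nonneg_left (pow_le_pow_right₀ ht1 (by omega)) hM0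
      have h2 : (M : K) * t ^ m ≤ a / 2 * t ^ n := by
        have hq := ht (2 * (p.leadingCoeff : ℚ)⁻¹ * (M : ℚ))
        have hcast : ((2 * (p.leadingCoeff : ℚ)⁻¹ * (M : ℚ) : ℚ) : K)
            = 2 * a⁻¹ * (M : K) := by push_cast [ha]; ring
        rw [hcast] at hq
        have hM_lt : (M : K) < a / 2 * t := by
          have := mul_lt_mul_of_pos_left hq (by positivity : (0:K) < a / 2)
          calc (M : K) = a / 2 * (2 * a⁻¹ * (M : K)) := by field_simp
            _ < a / 2 * t := this
        calc (M : K) * t ^ m ≤ (a / 2 * t) * t ^ m :=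
              mul_le_mul_of_nonneg_right hM_lt.le (pow_nonneg ht0.le m)
          _ = a / 2 * t ^ n := by rw [hm, pow_succ]; ring
      rw [← hre]
      exact h1.trans h2
  rw [abs_le] at key
  constructor
  · nlinarith [key.1]
  · nlinarith [key.2]


/-- Comparing `t`-power-weighted values of two integer polynomials at an infinitely
large `t` forces an inequality of degrees. -/
lemma my_deg_le {K : Type*} [Field K] [LinearOrder K] [IsStrictOrderedRing K] {t : K}
    (ht : ∀ q : ℚ, (q : K) < t) {A B : ℤ[X]}
    (hA : 0 < A.leadingCoeff) (hB : 0 < B.leadingCoeff) (k l : ℕ)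
    (h : t ^ k * aeval t B ≤ t ^ l * aeval t A)
    (hbound : ∀ (p : ℤ[X]), 0 < p.leadingCoeff →
      ((p.leadingCoeff : K) / 2) * t ^ p.natDegree ≤ aeval t p ∧
        aeval t p ≤ 2 * (p.leadingCoeff : K) * t ^ p.natDegree) :
    B.natDegree + k ≤ A.natDegree + l := by
  have ht1 : (1:K) ≤ t := le_of_lt (by simpa using ht 1)
  have ht0 : (0:K) < t := lt_of_lt_of_le zero_lt_one ht1
  set a : K := (A.leadingCoeff : K) with hado
  set b : K := (B.leadingCoeff : K) with hbdo
  have ha0 : 0 < a := by rw [hado]; exact_mod_cast hA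
  have hb0 : 0 < b := by rw [hbdo]; exact_mod_cast hB
  by_contra hcon
  push_neg at hcon
  set e := B.natDegree + k with he
  obtain ⟨m, hm⟩ : ∃ m, e = m + 1 := ⟨e - 1, by omega⟩
  have h1 : b / 2 * t ^ e ≤ t ^ k * aeval t B := by
    have := (hbound B hB).1
    calc b / 2 * t ^ e = t ^ k * (b / 2 * t ^ B.natDegree) := by rw [he, pow_add]; ring
      _ ≤ t ^ k * aeval t B :=
        mul_le_mul_of_nonneg_left this (pow_nonneg ht0.le k)
  have h2 : t ^ l * aeval t A ≤ 2 * a * t ^ m := by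
    have hA2 := (hbound A hA).2
    calc t ^ l * aeval t A ≤ t ^ l * (2 * a * t ^ A.natDegree) :=
          mul_le_mul_of_nonneg_left hA2 (pow_nonneg ht0.le l)
      _ = 2 * a * t ^ (A.natDegree + l) := by rw [pow_add]; ring
      _ ≤ 2 * a * t ^ m :=
          mul_le_mul_of_nonneg_left (pow_le_pow_right₀ ht1 (by omega)) (by positivity)
  have h3 : b / 2 * t * t ^ m ≤ 2 * a * t ^ m := by
    calc b / 2 * t * t ^ m = b / 2 * t ^ e := by rw [hm, pow_succ]; ring
      _ ≤ 2 * a * t ^ m := (h1.trans h).trans h2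
  have h4 : b / 2 * t ≤ 2 * a := le_of_mul_le_mul_right h3 (pow_pos ht0 m)
  have hq := ht (4 * (A.leadingCoeff : ℚ) / (B.leadingCoeff : ℚ))
  have hcast : ((4 * (A.leadingCoeff : ℚ) / (B.leadingCoeff : ℚ) : ℚ) : K)
      = 4 * a / b := by push_cast [hado, hbdo]; ring
  rw [hcast] at hq
  have : b / 2 * (4 * a / b) < b / 2 * t := mul_lt_mul_of_pos_left hq (by positivity)
  have heq : b / 2 * (4 * a / b) = 2 * a := by field_simp; ring
  linarith

/-- Every element of the ring closure of `{t}` is an integer polynomial in `t`. -/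
lemma my_mem_ring_closure {K : Type*} [CommRing K] {x y : K}
    (h : y ∈ Subring.closure {x}) : ∃ p : Polynomial ℤ, aeval x p = y := by
  have h' : y ∈ Algebra.adjoin ℤ ({x} : Set K) := by
    rw [Algebra.adjoin_int]; exact h
  rw [Algebra.adjoin_singleton_eq_range_aeval] at h'
  obtain ⟨p, hp⟩ := h'
  exact ⟨p, hp⟩

/-- Remark: in the non-Archimedean field `K` with `t` larger than every rational, the
roots `√t` and `∛t` of `(x² - t)(x³ - t)` cannot be separated by an interval with
endpoints in the subfield `ℚ(t)` generated by `t`: any interval with endpoints in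
`Subfield.closure {t}` containing `√t` also contains `∛t`. -/
theorem roots_not_separated
    {K : Type*} [Field K] [LinearOrder K] [IsStrictOrderedRing K] (t : K) (ht : ∀ q : ℚ, (q : K) < t)
    (s c : K) (hs : 0 < s) (hs2 : s ^ 2 = t) (hc : 0 < c) (hc3 : c ^ 3 = t)
    (α β : K) (hα : α ∈ Subfield.closure {t}) (hβ : β ∈ Subfield.closure {t})
    (h₁ : α < s) (h₂ : s < β) :
    α < c ∧ c < β := by
  have ht1 : (1:K) < t := by simpa using ht 1
  have ht0 : (0:K) < t := lt_trans zero_lt_one ht1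
  have e1 : s ^ 6 = t ^ 3 := by rw [← hs2]; ring
  have e2 : c ^ 6 = t ^ 2 := by rw [← hc3]; ring
  have hcs : c < s := by
    by_contra hcon
    push_neg at hcon
    have h6 : s ^ 6 ≤ c ^ 6 := pow_le_pow_left₀ hs.le hcon 6
    rw [e1, e2] at h6
    nlinarith [sq_nonneg t, pow_pos ht0 2]
  refine ⟨?_, hcs.trans h₂⟩
  by_contra hac
  push_neg at hac
  rw [Subfield.mem_closure_iff] at hα
  obtain ⟨y, hy, z, hz, hyz⟩ := hα
  obtain ⟨p, hp⟩ := my_mem_ring_closure hy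
  obtain ⟨q, hq⟩ := my_mem_ring_closure hz
  have hz0 : z ≠ 0 := by
    rintro rfl
    rw [div_zero] at hyz
    rw [← hyz] at hac
    linarith
  have hw : (0:K) < z * z := mul_self_pos.mpr hz0
  have hαval : α * (z * z) = y * z := by
    rw [← hyz]; field_simp
  have h_low : c * (z * z) ≤ y * z := by
    rw [← hαval]
    exact mul_le_mul_of_nonneg_right hac hw.le
  have h_up : y * z < s * (z * z) := by
    rw [← hαval]
    exact mul_lt_mul_of_pos_right h₁ hw
  have hyz_pos : (0:K) < y * z := lt_of_lt_of_le (mul_pos hc hw) h_low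
  have h6l : t ^ 2 * (z * z) ^ 6 ≤ (y * z) ^ 6 := by
    have := pow_le_pow_left₀ (mul_pos hc hw).le h_low 6
    calc t ^ 2 * (z * z) ^ 6 = (c * (z * z)) ^ 6 := by rw [← hc3]; ring
      _ ≤ (y * z) ^ 6 := this
  have h6u : (y * z) ^ 6 ≤ t ^ 3 * (z * z) ^ 6 := by
    have := pow_le_pow_left₀ hyz_pos.le h_up.le 6
    calc (y * z) ^ 6 ≤ (s * (z * z)) ^ 6 := this
      _ = t ^ 3 * (z * z) ^ 6 := by rw [← hs2]; ring
  -- translate into polynomial language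
  have hy0 : y ≠ 0 := fun h => by simp [h] at hyz_pos
  have hp0 : p ≠ 0 := fun h => hy0 (by rw [← hp, h, map_zero])
  have hq0 : q ≠ 0 := fun h => hz0 (by rw [← hq, h, map_zero])
  set A : Polynomial ℤ := (p * q) ^ 6 with hA_def
  set B : Polynomial ℤ := (q * q) ^ 6 with hB_def
  have hevA : aeval t A = (y * z) ^ 6 := by rw [hA_def, map_pow, map_mul, hp, hq]
  have hevB : aeval t B = (z * z) ^ 6 := by rw [hB_def, map_pow, map_mul, hq]
  have hApos : 0 < A.leadingCoeff := by
    rw [hA_def, leadingCoeff_pow]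
    exact Even.pow_pos (by decide) (leadingCoeff_ne_zero.mpr (mul_ne_zero hp0 hq0))
  have hBpos : 0 < B.leadingCoeff := by
    rw [hB_def, leadingCoeff_pow]
    exact Even.pow_pos (by decide) (leadingCoeff_ne_zero.mpr (mul_ne_zero hq0 hq0))
  have hbound := fun (r : Polynomial ℤ) (hr : 0 < r.leadingCoeff) => my_aeval_bounds ht r hr
  have d1 : B.natDegree + 2 ≤ A.natDegree + 0 := by
    refine my_deg_le ht hApos hBpos 2 0 ?_ hbound
    rw [hevA, hevB, pow_zero, one_mul]
    exact h6l
  have d2 : A.natDegree + 0 ≤ B.natDegree + 3 := by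
    refine my_deg_le ht hBpos hApos 0 3 ?_ hbound
    rw [hevA, hevB, pow_zero, one_mul]
    exact h6u
  have dA : A.natDegree = 6 * (p * q).natDegree := by rw [hA_def, natDegree_pow]
  have dB : B.natDegree = 6 * (q * q).natDegree := by rw [hB_def, natDegree_pow]
  omega
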